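/- arXiv:math-ph/0605034 — 2 statements merged into one kernel-verified Lean document; each statement's English description precedes it below -/
import Mathlib

section
/- Define the symmetrized kernel K_∞^s(z,w) = (K_∞(z,w) + K_∞(z, conj(w)))/2 where K_∞(z,w) = −(Re z + Re w + |z − w|). For γ(t) = e^{it}, 0 ≤ s, t ≤ π/2, s ≠ t, its t-derivative equals sin t − cos(s/2)cos(t/2) when s < t, and sin t + sin(s/2)sin(t/2) when t < s; consequently ∂K_∞^s(γ(t), γ(s))/∂t > 0 whenever t > π/3 and s ∈ [0, π/2], s ≠ t. -/
open Complex Real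

noncomputable def Kinf (z w : ℂ) : ℝ := -(z.re + w.re + ‖z - w‖)

noncomputable def KinfS (z w : ℂ) : ℝ := (Kinf z w + Kinf z ((starRingEnd ℂ) w)) / 2

lemma absExpSub (a b : ℝ) :
    ‖Complex.exp (↑a * Complex.I) - Complex.exp (↑b * Complex.I)‖
      = 2 * |Real.sin ((a - b)/2)| := by
  have h : Complex.exp (↑a * Complex.I) - Complex.exp (↑b * Complex.I)
      = Complex.exp (↑((a+b)/2) * Complex.I) * (2 * Complex.I * Complex.sin (↑((a-b)/2))) := by
    rw [Complex.sin]
    rw [show (2 : ℂ) * Complex.I * ((Complex.exp (-↑((a-b)/2) * Complex.I) - Complex.exp (↑((a-b)/2) * Complex.I)) * Complex.I / 2) = Complex.exp (↑((a-b)/2) * Complex.I) - Complex.exp (-↑((a-b)/2) * Complex.I) by ring_nf; rw [Complex.I_sq]; ring]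
    rw [mul_sub, ← Complex.exp_add, ← Complex.exp_add]
    congr 2 <;> push_cast <;> ring
  rw [h, norm_mul, Complex.norm_exp_ofReal_mul_I, one_mul, norm_mul, norm_mul,
    Complex.norm_two, Complex.norm_I, ← Complex.ofReal_sin, Complex.norm_real, Real.norm_eq_abs, mul_one]

lemma kinfS_eq (τ s : ℝ) :
    KinfS (Complex.exp (↑τ * Complex.I)) (Complex.exp (↑s * Complex.I))
      = -(Real.cos τ + Real.cos s + |Real.sin ((τ - s)/2)| + |Real.sin ((τ + s)/2)|) := by
  have hconj : (starRingEnd ℂ) (Complex.exp (↑s * Complex.I)) = Complex.exp (↑(-s) * Complex.I) := by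
    rw [← Complex.exp_conj, map_mul, Complex.conj_I, Complex.conj_ofReal]
    push_cast; ring_nf
  unfold KinfS Kinf
  rw [hconj, absExpSub, absExpSub, Complex.exp_ofReal_mul_I_re, Complex.exp_ofReal_mul_I_re,
    Complex.exp_ofReal_mul_I_re, Real.cos_neg]
  rw [show (τ - -s)/2 = (τ + s)/2 by ring]
  ring

theorem KinfS_deriv (s t : ℝ) (hs : s ∈ Set.Icc 0 (π/2)) (ht : t ∈ Set.Icc 0 (π/2))
    (hst : s ≠ t) :
    let γ : ℝ → ℂ := fun τ => Complex.exp (τ * Complex.I)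
    (s < t → HasDerivAt (fun τ => KinfS (γ τ) (γ s))
        (Real.sin t - Real.cos (s/2) * Real.cos (t/2)) t) ∧
    (t < s → HasDerivAt (fun τ => KinfS (γ τ) (γ s))
        (Real.sin t + Real.sin (s/2) * Real.sin (t/2)) t) ∧
    (π/3 < t → 0 < deriv (fun τ => KinfS (γ τ) (γ s)) t) := by
  intro γ
  obtain ⟨hs0, hs2⟩ := hs
  obtain ⟨ht0, ht2⟩ := ht
  have hpi : (0:ℝ) < π := Real.pi_pos
  -- Case s < t derivative
  have case1 : s < t → HasDerivAt (fun τ => KinfS (γ τ) (γ s))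
      (Real.sin t - Real.cos (s/2) * Real.cos (t/2)) t := by
    intro hlt
    have h2 : HasDerivAt (fun τ : ℝ => (τ - s)/2) (1/2) t := by
      simpa using ((hasDerivAt_id t).sub_const s).div_const 2
    have h3 : HasDerivAt (fun τ : ℝ => (τ + s)/2) (1/2) t := by
      simpa using ((hasDerivAt_id t).add_const s).div_const 2
    have h4 := (Real.hasDerivAt_sin ((t - s)/2)).comp t h2
    have h5 := (Real.hasDerivAt_sin ((t + s)/2)).comp t h3
    have hg : HasDerivAt
        (fun τ => -(Real.cos τ + Real.cos s + Real.sin ((τ - s)/2) + Real.sin ((τ + s)/2)))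
        (Real.sin t - Real.cos (s/2) * Real.cos (t/2)) t := by
      have := ((((Real.hasDerivAt_cos t).add_const (Real.cos s)).add h4).add h5).neg
      convert this using 1
      · rfl
      · rfl
      · rfl
      rw [show (t - s)/2 = t/2 - s/2 by ring, show (t + s)/2 = t/2 + s/2 by ring,
        Real.cos_sub, Real.cos_add, show t = 2 * (t/2) by ring, Real.sin_two_mul]
      ring
    apply hg.congr_of_eventuallyEq
    have hmem : Set.Ioo s (2*π - s) ∈ nhds t := by
      apply Ioo_mem_nhds hlt
      nlinarith
    filter_upwards [hmem] with τ hτ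
    show KinfS (γ τ) (γ s) = _
    rw [kinfS_eq]
    rw [_root_.abs_of_nonneg, _root_.abs_of_nonneg]
    · apply Real.sin_nonneg_of_nonneg_of_le_pi <;> nlinarith [hτ.1, hτ.2]
    · apply Real.sin_nonneg_of_nonneg_of_le_pi <;> nlinarith [hτ.1, hτ.2]
  -- Case t < s derivative
  have case2 : t < s → HasDerivAt (fun τ => KinfS (γ τ) (γ s))
      (Real.sin t + Real.sin (s/2) * Real.sin (t/2)) t := by
    intro hlt
    have hspos : 0 < s := lt_of_le_of_lt ht0 hlt
    have h2 : HasDerivAt (fun τ : ℝ => (s - τ)/2) (-1/2) t := by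
      simpa using ((hasDerivAt_id t).const_sub s).div_const 2
    have h3 : HasDerivAt (fun τ : ℝ => (τ + s)/2) (1/2) t := by
      simpa using ((hasDerivAt_id t).add_const s).div_const 2
    have h4 := (Real.hasDerivAt_sin ((s - t)/2)).comp t h2
    have h5 := (Real.hasDerivAt_sin ((t + s)/2)).comp t h3
    have hg : HasDerivAt
        (fun τ => -(Real.cos τ + Real.cos s + Real.sin ((s - τ)/2) + Real.sin ((τ + s)/2)))
        (Real.sin t + Real.sin (s/2) * Real.sin (t/2)) t := by
      have := ((((Real.hasDerivAt_cos t).add_const (Real.cos s)).add h4).add h5).neg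
      convert this using 1
      · rfl
      · rfl
      · rfl
      rw [show (s - t)/2 = s/2 - t/2 by ring, show (t + s)/2 = t/2 + s/2 by ring,
        Real.cos_sub, Real.cos_add]
      ring
    apply hg.congr_of_eventuallyEq
    have hmem : Set.Ioo (-s) s ∈ nhds t := by
      apply Ioo_mem_nhds (by linarith) hlt
    filter_upwards [hmem] with τ hτ
    show KinfS (γ τ) (γ s) = _
    rw [kinfS_eq]
    rw [_root_.abs_of_nonpos, _root_.abs_of_nonneg, show -Real.sin ((τ - s)/2) = Real.sin ((s - τ)/2) by
      rw [show (s - τ)/2 = -((τ - s)/2) by ring, Real.sin_neg]]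
    · apply Real.sin_nonneg_of_nonneg_of_le_pi <;> nlinarith [hτ.1, hτ.2]
    · apply Real.sin_nonpos_of_nonpos_of_neg_pi_le <;> nlinarith [hτ.1, hτ.2]
  refine ⟨case1, case2, ?_⟩
  intro htpi
  rcases hst.lt_or_gt with hlt | hlt
  · rw [(case1 hlt).deriv]
    have hc : 0 < Real.cos (t/2) := Real.cos_pos_of_mem_Ioo ⟨by linarith, by linarith⟩
    have hsin : Real.sin (π/6) < Real.sin (t/2) := by
      apply Real.sin_lt_sin_of_lt_of_le_pi_div_two (by linarith) (by linarith) (by linarith)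
    rw [Real.sin_pi_div_six] at hsin
    have hcs : Real.cos (s/2) ≤ 1 := Real.cos_le_one _
    rw [show Real.sin t = 2 * Real.sin (t/2) * Real.cos (t/2) by rw [← Real.sin_two_mul]; congr 1; ring]
    nlinarith
  · rw [(case2 hlt).deriv]
    have h1 : 0 < Real.sin t := Real.sin_pos_of_pos_of_lt_pi (by linarith) (by linarith)
    have h2 : 0 ≤ Real.sin (s/2) := Real.sin_nonneg_of_nonneg_of_le_pi (by linarith) (by linarith)
    have h3 : 0 ≤ Real.sin (t/2) := Real.sin_nonneg_of_nonneg_of_le_pi (by linarith) (by linarith)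
    nlinarith
end

section
/- Let A be a compact set in the open right half-plane. Assuming Frostman's lemma (that any compactly supported signed measure ν with ν = 0 total mass and ∬ |z−w| dν(z)dν(w) ≥ 0 must be zero), the minimizer of J(μ) = ∬ K_∞(z,w) dμ(z) dμ(w), K_∞(z,w) = −(Re z + Re w + |z − w|), over probability measures μ on A is unique. -/
open Complex MeasureTheory
open scoped ENNReal

noncomputable def Jen (μ : Measure ℂ) : ℝ := ∫ z, ∫ w, Kinf z w ∂μ ∂μ

/-- Energy of a "signed measure" ν = ν₁ - ν₂ with respect to a kernel k. -/
noncomputable def sEnergy (ν₁ ν₂ : Measure ℂ) (k : ℂ → ℂ → ℝ) : ℝ :=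
  (∫ z, ∫ w, k z w ∂ν₁ ∂ν₁) - (∫ z, ∫ w, k z w ∂ν₂ ∂ν₁)
    - (∫ z, ∫ w, k z w ∂ν₁ ∂ν₂) + (∫ z, ∫ w, k z w ∂ν₂ ∂ν₂)

section Aux

variable {A : Set ℂ} {R : ℝ} (hR0 : 0 ≤ R) (hR : ∀ z ∈ A, ‖z‖ ≤ R)
variable {k : ℂ → ℂ → ℝ} (hk : Continuous fun p : ℂ × ℂ => k p.1 p.2)
variable {c : ℝ} (hc : ∀ z w, |k z w| ≤ c * (1 + ‖z‖ + ‖w‖))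

lemma ae_memA {ν : Measure ℂ} (hν : ν Aᶜ = 0) : ∀ᵐ z ∂ν, z ∈ A := by
  rw [MeasureTheory.ae_iff]; exact hν

include hR0 hR hc in
lemma kbound {z w : ℂ} (hw : w ∈ A) : ‖k z w‖ ≤ |c| * (1 + ‖z‖ + R) := by
  have h2 := hR w hw
  calc ‖k z w‖ = |k z w| := rfl
  _ ≤ c * (1 + ‖z‖ + ‖w‖) := hc z w
  _ ≤ |c| * (1 + ‖z‖ + ‖w‖) :=
      mul_le_mul_of_nonneg_right (le_abs_self c) (by positivity)
  _ ≤ |c| * (1 + ‖z‖ + R) :=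
      mul_le_mul_of_nonneg_left (by linarith) (abs_nonneg c)

include hR0 hR hk hc in
lemma inner_integrable {ν : Measure ℂ} [IsFiniteMeasure ν] (hν : ν Aᶜ = 0) (z : ℂ) :
    Integrable (fun w => k z w) ν := by
  refine (integrable_const (|c| * (1 + ‖z‖ + R))).mono'
    ((hk.comp (Continuous.prodMk_right z)).aestronglyMeasurable) ?_
  filter_upwards [ae_memA hν] with w hw
  exact kbound hR0 hR hc hw

include hk in
lemma inner_meas (ν : Measure ℂ) [SFinite ν] :
    StronglyMeasurable (fun z => ∫ w, k z w ∂ν) :=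
  hk.stronglyMeasurable.integral_prod_right'

include hR0 hR hk hc in
lemma outer_integrable {ν₁ ν₂ : Measure ℂ} [IsFiniteMeasure ν₁] [IsFiniteMeasure ν₂]
    (hν₁ : ν₁ Aᶜ = 0) (hν₂ : ν₂ Aᶜ = 0) :
    Integrable (fun z => ∫ w, k z w ∂ν₂) ν₁ := by
  refine (integrable_const (|c| * (1 + R + R) * (ν₂ Set.univ).toReal)).mono'
    (inner_meas hk ν₂).aestronglyMeasurable ?_
  filter_upwards [ae_memA hν₁] with z hz
  calc ‖∫ w, k z w ∂ν₂‖ ≤ ∫ w, ‖k z w‖ ∂ν₂ := norm_integral_le_integral_norm _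
  _ ≤ ∫ _w, |c| * (1 + R + R) ∂ν₂ := by
      refine integral_mono_ae (inner_integrable hR0 hR hk hc hν₂ z).norm
        (integrable_const _) ?_
      filter_upwards [ae_memA hν₂] with w hw
      calc ‖k z w‖ ≤ |c| * (1 + ‖z‖ + R) := kbound hR0 hR hc hw
      _ ≤ |c| * (1 + R + R) :=
          mul_le_mul_of_nonneg_left (by have := hR z hz; linarith) (abs_nonneg c)
  _ = |c| * (1 + R + R) * (ν₂ Set.univ).toReal := by
      rw [integral_const]; simp [mul_comm, measureReal_def]

/-- double integral -/
noncomputable def DInt (ν₁ ν₂ : Measure ℂ) (k : ℂ → ℂ → ℝ) : ℝ :=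
  ∫ z, ∫ w, k z w ∂ν₂ ∂ν₁

include hR0 hR hk hc in
lemma DInt_half_add_half_add {ν₁ ν₂ : Measure ℂ} [IsFiniteMeasure ν₁] [IsFiniteMeasure ν₂]
    (hν₁ : ν₁ Aᶜ = 0) (hν₂ : ν₂ Aᶜ = 0) :
    DInt ((2:ℝ≥0∞)⁻¹ • (ν₁ + ν₂)) ((2:ℝ≥0∞)⁻¹ • (ν₁ + ν₂)) k
      = (4:ℝ)⁻¹ * (DInt ν₁ ν₁ k + DInt ν₁ ν₂ k + DInt ν₂ ν₁ k + DInt ν₂ ν₂ k) := by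
  have htr : ((2:ℝ≥0∞)⁻¹).toReal = (2:ℝ)⁻¹ := by simp
  have hinner : ∀ z, ∫ w, k z w ∂((2:ℝ≥0∞)⁻¹ • (ν₁ + ν₂))
      = (2:ℝ)⁻¹ * (∫ w, k z w ∂ν₁ + ∫ w, k z w ∂ν₂) := by
    intro z
    rw [integral_smul_measure, integral_add_measure (inner_integrable hR0 hR hk hc hν₁ z)
      (inner_integrable hR0 hR hk hc hν₂ z), htr, smul_eq_mul]
  have hG : ∀ (ν : Measure ℂ) (_ : IsFiniteMeasure ν) (_ : ν Aᶜ = 0),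
      (∫ z, (2:ℝ)⁻¹ * (∫ w, k z w ∂ν₁ + ∫ w, k z w ∂ν₂) ∂ν)
      = (2:ℝ)⁻¹ * ((∫ z, ∫ w, k z w ∂ν₁ ∂ν) + ∫ z, ∫ w, k z w ∂ν₂ ∂ν) := by
    intro ν _ hν
    rw [integral_const_mul, integral_add (outer_integrable hR0 hR hk hc hν hν₁)
      (outer_integrable hR0 hR hk hc hν hν₂)]
  have hGint : ∀ (ν : Measure ℂ) (_ : IsFiniteMeasure ν) (_ : ν Aᶜ = 0),
      Integrable (fun z => (2:ℝ)⁻¹ * (∫ w, k z w ∂ν₁ + ∫ w, k z w ∂ν₂)) ν := by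
    intro ν _ hν
    exact (((outer_integrable hR0 hR hk hc hν hν₁).add
      (outer_integrable hR0 hR hk hc hν hν₂)).const_mul _)
  unfold DInt
  simp_rw [hinner]
  rw [integral_smul_measure, integral_add_measure (hGint ν₁ ‹_› hν₁) (hGint ν₂ ‹_› hν₂),
    hG ν₁ ‹_› hν₁, hG ν₂ ‹_› hν₂, htr, smul_eq_mul]
  ring
include hR in
lemma re_integrable {ν : Measure ℂ} [IsFiniteMeasure ν] (hν : ν Aᶜ = 0) :
    Integrable (fun w => w.re) ν := by
  refine (integrable_const R).mono' Complex.continuous_re.aestronglyMeasurable ?_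
  filter_upwards [ae_memA hν] with w hw
  exact le_trans (Complex.abs_re_le_norm w) (hR w hw)

end Aux

lemma hk_abs : Continuous fun p : ℂ × ℂ => ‖p.1 - p.2‖ :=
  continuous_norm.comp (continuous_fst.sub continuous_snd)

lemma hc_abs : ∀ z w : ℂ, |‖z - w‖| ≤ 1 * (1 + ‖z‖ + ‖w‖) := by
  intro z w
  rw [_root_.abs_of_nonneg (norm_nonneg _), one_mul]
  calc ‖z - w‖ = ‖z - w‖ := rfl
  _ ≤ ‖z‖ + ‖w‖ := norm_sub_le z w
  _ ≤ 1 + ‖z‖ + ‖w‖ := by linarith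

lemma hk_Kinf : Continuous fun p : ℂ × ℂ => Kinf p.1 p.2 := by
  unfold Kinf
  exact (((Complex.continuous_re.comp continuous_fst).add
    (Complex.continuous_re.comp continuous_snd)).add
    (continuous_norm.comp (continuous_fst.sub continuous_snd))).neg

lemma hc_Kinf : ∀ z w : ℂ, |Kinf z w| ≤ 2 * (1 + ‖z‖ + ‖w‖) := by
  intro z w
  unfold Kinf
  rw [abs_neg]
  have h1 := Complex.abs_re_le_norm z
  have h2 := Complex.abs_re_le_norm w
  have h3 : ‖z - w‖ ≤ ‖z‖ + ‖w‖ := norm_sub_le z w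
  have : ‖z‖ = ‖z‖ := rfl
  have := abs_add_le (z.re + w.re) (‖z - w‖)
  have := abs_add_le z.re w.re
  have := abs_nonneg (z.re + w.re + ‖z - w‖)
  calc |z.re + w.re + ‖z - w‖| ≤ |z.re + w.re| + |‖z - w‖| :=
      abs_add_le _ _
  _ ≤ |z.re| + |w.re| + ‖z - w‖ := by
      rw [_root_.abs_of_nonneg (norm_nonneg _)]
      have := abs_add_le z.re w.re
      linarith
  _ ≤ 2 * (1 + ‖z‖ + ‖w‖) := by linarith

section Decomp

variable {A : Set ℂ} {R : ℝ} (hR0 : 0 ≤ R) (hR : ∀ z ∈ A, ‖z‖ ≤ R)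

include hR0 hR in
lemma DInt_Kinf_eq {ν₁ ν₂ : Measure ℂ} [IsProbabilityMeasure ν₁] [IsProbabilityMeasure ν₂]
    (hν₁ : ν₁ Aᶜ = 0) (hν₂ : ν₂ Aᶜ = 0) :
    DInt ν₁ ν₂ Kinf
      = -((∫ z, z.re ∂ν₁) + (∫ w, w.re ∂ν₂)
          + DInt ν₁ ν₂ (fun z w => ‖z - w‖)) := by
  have habs : ∀ z, Integrable (fun w => ‖z - w‖) ν₂ :=
    inner_integrable hR0 hR hk_abs hc_abs hν₂
  have hre₂ : Integrable (fun w : ℂ => w.re) ν₂ := re_integrable hR hν₂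
  have hinner : ∀ z, (∫ w, Kinf z w ∂ν₂)
      = -(z.re + (∫ w, w.re ∂ν₂) + ∫ w, ‖z - w‖ ∂ν₂) := by
    intro z
    unfold Kinf
    have hsum : Integrable (fun w : ℂ => z.re + w.re) ν₂ := (integrable_const z.re).add hre₂
    rw [integral_neg, integral_add hsum (habs z),
      integral_add (integrable_const z.re) hre₂, integral_const]
    simp
  unfold DInt
  simp_rw [hinner]
  have hsum : Integrable (fun z : ℂ => z.re + ∫ w, w.re ∂ν₂) ν₁ :=
    (re_integrable hR hν₁).add (integrable_const _)
  rw [integral_neg, integral_add hsum (outer_integrable hR0 hR hk_abs hc_abs hν₁ hν₂),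
    integral_add (re_integrable hR hν₁) (integrable_const _), integral_const]
  simp

end Decomp

theorem Kinf_equilibrium_unique (A : Set ℂ) (hA : IsCompact A) (hAH : ∀ z ∈ A, 0 < z.re)
    -- Frostman's lemma as a hypothesis:
    (frostman : ∀ ν₁ ν₂ : Measure ℂ, IsFiniteMeasure ν₁ → IsFiniteMeasure ν₂ →
      (∃ S : Set ℂ, IsCompact S ∧ ν₁ Sᶜ = 0 ∧ ν₂ Sᶜ = 0) →
      ν₁ Set.univ = ν₂ Set.univ →
      0 ≤ sEnergy ν₁ ν₂ (fun z w => ‖z - w‖) → ν₁ = ν₂)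
    (μ μ' : Measure ℂ) [IsProbabilityMeasure μ] [IsProbabilityMeasure μ']
    (hμA : μ Aᶜ = 0) (hμ'A : μ' Aᶜ = 0)
    (hmin : ∀ σ : Measure ℂ, IsProbabilityMeasure σ → σ Aᶜ = 0 → Jen μ ≤ Jen σ)
    (hmin' : ∀ σ : Measure ℂ, IsProbabilityMeasure σ → σ Aᶜ = 0 → Jen μ' ≤ Jen σ) :
    μ = μ' := by
  obtain ⟨R₀, hR₀⟩ := hA.isBounded.exists_norm_le
  set R := max R₀ 0 with hRdef
  have hR0 : (0:ℝ) ≤ R := le_max_right _ _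
  have hR : ∀ z ∈ A, ‖z‖ ≤ R := fun z hz => (hR₀ z hz).trans (le_max_left _ _)
  set σ : Measure ℂ := (2:ℝ≥0∞)⁻¹ • (μ + μ') with hσdef
  have hσprob : IsProbabilityMeasure σ := by
    constructor
    rw [hσdef]
    simp [Measure.smul_apply, measure_univ, smul_eq_mul]
    rw [ENNReal.inv_two_add_inv_two]
  have hσA : σ Aᶜ = 0 := by
    rw [hσdef]
    simp [Measure.smul_apply, hμA, hμ'A]
  have hJσ : Jen σ = (4:ℝ)⁻¹ * (DInt μ μ Kinf + DInt μ μ' Kinf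
      + DInt μ' μ Kinf + DInt μ' μ' Kinf) := by
    have := DInt_half_add_half_add hR0 hR hk_Kinf hc_Kinf hμA hμ'A
    exact this
  have h1 : Jen μ ≤ Jen σ := hmin σ hσprob hσA
  have h2 : Jen μ' ≤ Jen σ := hmin' σ hσprob hσA
  have hJμ : Jen μ = DInt μ μ Kinf := rfl
  have hJμ' : Jen μ' = DInt μ' μ' Kinf := rfl
  have hE : DInt μ μ Kinf - DInt μ μ' Kinf - DInt μ' μ Kinf + DInt μ' μ' Kinf ≤ 0 := by
    rw [hJμ, hJσ] at h1
    rw [hJμ', hJσ] at h2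
    linarith
  have e11 := DInt_Kinf_eq hR0 hR hμA hμA
  have e12 := DInt_Kinf_eq hR0 hR hμA hμ'A
  have e21 := DInt_Kinf_eq hR0 hR hμ'A hμA
  have e22 := DInt_Kinf_eq hR0 hR hμ'A hμ'A
  have hpos : 0 ≤ sEnergy μ μ' (fun z w => ‖z - w‖) := by
    have hs : sEnergy μ μ' (fun z w => ‖z - w‖)
        = DInt μ μ (fun z w => ‖z - w‖)
          - DInt μ μ' (fun z w => ‖z - w‖)
          - DInt μ' μ (fun z w => ‖z - w‖)
          + DInt μ' μ' (fun z w => ‖z - w‖) := rfl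
    rw [hs]
    rw [e11, e12, e21, e22] at hE
    linarith
  exact frostman μ μ' inferInstance inferInstance ⟨A, hA, hμA, hμ'A⟩
    (by simp [measure_univ]) hpos
end
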